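/- Let k be a field of characteristic p, G = ⟨g⟩ cyclic of order p acting on V = k² by g·v = v, g·w = v + w. Define κ : V × V → kG alternating bilinear by κ(v,w) = g. Then κ is G-covariant in the sense required by PBW Condition (2) with the λ of Example 2.2: κ(g·u₁, g·u₂)·g − g·κ(u₁,u₂) = λ(λ(g,u₂), u₁) − λ(λ(g,u₁), u₂) for all u₁, u₂ ∈ V, where λ(gⁱ,v)=0 and λ(gⁱ,w)=i g^{i−1}. -/

import Mathlib

noncomputable section

variable (k : Type*) [Field k] (p : ℕ) [Fact p.Prime] [CharP k p]

/-- The action of `gⁱ` on `V = k²` (basis `v, w`) by the matrix `[[1,i],[0,1]]`. -/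
def act (i : ZMod p) (u : k × k) : k × k :=
  (u.1 + (ZMod.castHom (dvd_refl p) k i) * u.2, u.2)

/-- The parameter `λ(gⁱ, u₁·v + u₂·w) = u₂ · i · g^{i−1}` of Example 2.2. -/
def lam (i : ZMod p) (u : k × k) :
    MonoidAlgebra k (Multiplicative (ZMod p)) :=
  ((ZMod.castHom (dvd_refl p) k i) * u.2) •
    MonoidAlgebra.single (Multiplicative.ofAdd (i - 1)) (1 : k)

/-- The extension of `λ` linearly over `kG` in its first argument. -/
def Lam (x : MonoidAlgebra k (Multiplicative (ZMod p))) (u : k × k) :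
    MonoidAlgebra k (Multiplicative (ZMod p)) :=
  Finsupp.sum x.coeff fun h c => c • lam k p (Multiplicative.toAdd h) u

/-- The alternating bilinear map with `κ(v,w) = g`. -/
def kap (u₁ u₂ : k × k) : MonoidAlgebra k (Multiplicative (ZMod p)) :=
  (u₁.1 * u₂.2 - u₁.2 * u₂.1) •
    MonoidAlgebra.single (Multiplicative.ofAdd (1 : ZMod p)) (1 : k)

/-- PBW Condition (2) for Example 2.2:
`κ(g·u₁, g·u₂)·g − g·κ(u₁,u₂) = λ(λ(g,u₂),u₁) − λ(λ(g,u₁),u₂)`. -/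
theorem stmt12 :
    ∀ u₁ u₂ : k × k,
      kap k p (act k p 1 u₁) (act k p 1 u₂)
          * MonoidAlgebra.single (Multiplicative.ofAdd (1 : ZMod p)) (1 : k)
        - MonoidAlgebra.single (Multiplicative.ofAdd (1 : ZMod p)) (1 : k)
          * kap k p u₁ u₂
        = Lam k p (lam k p 1 u₂) u₁ - Lam k p (lam k p 1 u₁) u₂ := by
  intro u₁ u₂
  have hR : ∀ u u' : k × k, Lam k p (lam k p 1 u) u' = 0 := by
    intro u u'
    simp [Lam, lam, Finsupp.smul_single, Finsupp.sum_single_index]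
  have hk : kap k p (act k p 1 u₁) (act k p 1 u₂) = kap k p u₁ u₂ := by
    simp only [kap, act]
    ring_nf
  rw [hk, mul_comm, hR, hR, sub_self, sub_self]
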